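/- Let L be an e-cyclic residuated lattice. Then every prime convex subalgebra P ≠ L of L contains a minimal prime convex subalgebra of L, and the intersection of all minimal prime convex subalgebras of L equals {e}. -/
import Mathlib


universe u

/-- A residuated lattice: a lattice-ordered monoid with left and right residuals.
`ldiv x z` is `x \ z` and `rdiv z y` is `z / y`. -/
class ResiduatedLattice (α : Type u) extends Lattice α, Monoid α where
  ldiv : α → α → α
  rdiv : α → α → α
  mul_le_iff_le_ldiv : ∀ x y z : α, x * y ≤ z ↔ y ≤ ldiv x z
  mul_le_iff_le_rdiv : ∀ x y z : α, x * y ≤ z ↔ x ≤ rdiv z y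

namespace ResiduatedLattice

variable {α : Type u} [ResiduatedLattice α]

/-- `L` is e-cyclic if `x \ e = e / x` for all `x`. -/
def ECyclic (α : Type u) [ResiduatedLattice α] : Prop :=
  ∀ x : α, ldiv x 1 = rdiv 1 x

/-- Absolute value: `|x| = x ⊓ (e / x) ⊓ e`. -/
def absv (x : α) : α := x ⊓ rdiv 1 x ⊓ 1

/-- A convex subalgebra: contains `e`, closed under all the operations, and order-convex. -/
structure IsConvexSubalgebra (H : Set α) : Prop where
  one_mem : (1 : α) ∈ H
  mul_mem : ∀ ⦃x⦄, x ∈ H → ∀ ⦃y⦄, y ∈ H → x * y ∈ H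
  sup_mem : ∀ ⦃x⦄, x ∈ H → ∀ ⦃y⦄, y ∈ H → x ⊔ y ∈ H
  inf_mem : ∀ ⦃x⦄, x ∈ H → ∀ ⦃y⦄, y ∈ H → x ⊓ y ∈ H
  ldiv_mem : ∀ ⦃x⦄, x ∈ H → ∀ ⦃y⦄, y ∈ H → ldiv x y ∈ H
  rdiv_mem : ∀ ⦃x⦄, x ∈ H → ∀ ⦃y⦄, y ∈ H → rdiv x y ∈ H
  convex : ∀ ⦃a⦄, a ∈ H → ∀ ⦃b⦄, b ∈ H → ∀ ⦃x⦄, a ≤ x → x ≤ b → x ∈ H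

/-- `C[S]`: the smallest convex subalgebra containing `S`. -/
def convexClosure (S : Set α) : Set α :=
  ⋂₀ {H : Set α | IsConvexSubalgebra H ∧ S ⊆ H}


-- auxiliary lemmas

theorem mul_ldiv_le (x y : α) : x * ldiv x y ≤ y :=
  (mul_le_iff_le_ldiv x (ldiv x y) y).mpr le_rfl

theorem rdiv_mul_le (x y : α) : rdiv y x * x ≤ y :=
  (mul_le_iff_le_rdiv (rdiv y x) x y).mpr le_rfl

theorem rlmul_mono {a b c d : α} (h1 : a ≤ b) (h2 : c ≤ d) : a * c ≤ b * d := by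
  have hb : b * c ≤ b * d :=
    (mul_le_iff_le_ldiv b c (b * d)).mpr
      (le_trans h2 ((mul_le_iff_le_ldiv b d (b * d)).mp le_rfl))
  exact (mul_le_iff_le_rdiv a c (b * d)).mpr
    (le_trans h1 ((mul_le_iff_le_rdiv b c (b * d)).mp hb))

theorem mul_sup_le (a b c : α) : a * (b ⊔ c) ≤ a * b ⊔ a * c := by
  refine (mul_le_iff_le_ldiv _ _ _).mpr (sup_le ?_ ?_)
  · exact (mul_le_iff_le_ldiv _ _ _).mp (le_sup_left)
  · exact (mul_le_iff_le_ldiv _ _ _).mp (le_sup_right)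

theorem sup_mul_le (a b c : α) : (a ⊔ b) * c ≤ a * c ⊔ b * c := by
  refine (mul_le_iff_le_rdiv _ _ _).mpr (sup_le ?_ ?_)
  · exact (mul_le_iff_le_rdiv _ _ _).mp (le_sup_left)
  · exact (mul_le_iff_le_rdiv _ _ _).mp (le_sup_right)

theorem mul_le_left {a b : α} (hb : b ≤ 1) : a * b ≤ a := by
  simpa using rlmul_mono (le_refl a) hb

theorem mul_le_right {a b : α} (ha : a ≤ 1) : a * b ≤ b := by
  simpa using rlmul_mono ha (le_refl b)

theorem mul_le_one' {a b : α} (ha : a ≤ 1) (hb : b ≤ 1) : a * b ≤ 1 :=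
  le_trans (mul_le_left hb) ha

theorem pow_le_one' {a : α} (ha : a ≤ 1) : ∀ n : ℕ, a ^ n ≤ 1
  | 0 => by simp
  | n + 1 => by rw [pow_succ]; exact mul_le_one' (pow_le_one' ha n) ha

theorem pow_mono' {a b : α} (h : a ≤ b) : ∀ n : ℕ, a ^ n ≤ b ^ n
  | 0 => by simp
  | n + 1 => by rw [pow_succ, pow_succ]; exact rlmul_mono (pow_mono' h n) h

theorem rdiv_one_anti {x y : α} (h : x ≤ y) : rdiv 1 y ≤ rdiv 1 x :=
  (mul_le_iff_le_rdiv _ _ _).mp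
    (le_trans (rlmul_mono (le_refl _) h) (rdiv_mul_le y 1))

theorem absv_le_self (x : α) : absv x ≤ x := le_trans inf_le_left inf_le_left
theorem absv_le_one (x : α) : absv x ≤ 1 := inf_le_right
theorem absv_le_rdiv (x : α) : absv x ≤ rdiv 1 x := le_trans inf_le_left inf_le_right

theorem absv_mul_le (x : α) : absv x * x ≤ 1 :=
  le_trans (rlmul_mono (absv_le_rdiv x) (le_refl x)) (rdiv_mul_le x 1)

theorem mul_absv_le (hec : ECyclic α) (x : α) : x * absv x ≤ 1 := by
  have h : absv x ≤ ldiv x 1 := by rw [hec x]; exact absv_le_rdiv x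
  exact le_trans (rlmul_mono (le_refl x) h) (mul_ldiv_le x 1)

theorem absv_one : absv (1 : α) = 1 := by
  have h1 : (1 : α) ≤ rdiv 1 1 := (mul_le_iff_le_rdiv 1 1 1).mp (by simp)
  simp [absv, h1]

theorem absv_of_le_one {a : α} (ha : a ≤ 1) : absv a = a := by
  have h : a ≤ rdiv 1 a := (mul_le_iff_le_rdiv a a 1).mp (mul_le_one' ha ha)
  simp [absv, h, ha]

theorem eq_one_of_le_absv {a : α} (h : (1 : α) ≤ absv a) : a = 1 := by
  have h1 : (1 : α) ≤ a := le_trans h (absv_le_self a)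
  have h2 : a ≤ 1 := by
    have := le_trans h (absv_le_rdiv a)
    have := (mul_le_iff_le_rdiv 1 a 1).mpr this
    simpa using this
  exact le_antisymm h2 h1

-- |x| ≤ absv lower bounds for operations (the key e-cyclic inequalities)
theorem absv_mul_absv_le_ldiv (hec : ECyclic α) (x y : α) : absv x * absv y ≤ ldiv x y := by
  refine (mul_le_iff_le_ldiv _ _ _).mp ?_
  calc x * (absv x * absv y) = x * absv x * absv y := by rw [mul_assoc]
    _ ≤ 1 * absv y := rlmul_mono (mul_absv_le hec x) (le_refl _)
    _ = absv y := one_mul _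
    _ ≤ y := absv_le_self y

theorem absv_mul_absv_ldiv_le_one (x y : α) : absv y * absv x * ldiv x y ≤ 1 := by
  calc absv y * absv x * ldiv x y ≤ absv y * x * ldiv x y :=
        rlmul_mono (rlmul_mono (le_refl _) (absv_le_self x)) (le_refl _)
    _ = absv y * (x * ldiv x y) := by rw [mul_assoc]
    _ ≤ absv y * y := rlmul_mono (le_refl _) (mul_ldiv_le x y)
    _ ≤ 1 := absv_mul_le y

theorem absv_mul_absv_le_rdiv (x y : α) : absv x * absv y ≤ rdiv x y := by
  refine (mul_le_iff_le_rdiv _ _ _).mp ?_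
  calc absv x * absv y * y = absv x * (absv y * y) := by rw [mul_assoc]
    _ ≤ absv x * 1 := rlmul_mono (le_refl _) (absv_mul_le y)
    _ = absv x := mul_one _
    _ ≤ x := absv_le_self x

theorem absv_mul_absv_rdiv_le_one (hec : ECyclic α) (x y : α) :
    absv y * absv x * rdiv x y ≤ 1 := by
  have h1 : absv x * rdiv x y ≤ rdiv 1 y := by
    refine (mul_le_iff_le_rdiv _ _ _).mp ?_
    calc absv x * rdiv x y * y = absv x * (rdiv x y * y) := by rw [mul_assoc]
      _ ≤ absv x * x := rlmul_mono (le_refl (absv x)) (rdiv_mul_le y x)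
      _ ≤ 1 := absv_mul_le x
  have h2 : absv x * rdiv x y ≤ ldiv y 1 := by rw [hec y]; exact h1
  calc absv y * absv x * rdiv x y ≤ y * absv x * rdiv x y :=
        rlmul_mono (rlmul_mono (absv_le_self y) (le_refl _)) (le_refl _)
    _ = y * (absv x * rdiv x y) := by rw [mul_assoc]
    _ ≤ y * ldiv y 1 := rlmul_mono (le_refl _) h2
    _ ≤ 1 := mul_ldiv_le y 1


theorem IsConvexSubalgebra.absv_mem {H : Set α} (hH : IsConvexSubalgebra H)
    {x : α} (hx : x ∈ H) : absv x ∈ H :=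
  hH.inf_mem (hH.inf_mem hx (hH.rdiv_mem hH.one_mem hx)) hH.one_mem

theorem IsConvexSubalgebra.mem_of_absv_mem (hec : ECyclic α) {H : Set α}
    (hH : IsConvexSubalgebra H) {x : α} (hx : absv x ∈ H) : x ∈ H := by
  have h1 : x ≤ rdiv 1 (absv x) :=
    (mul_le_iff_le_rdiv _ _ _).mp (mul_absv_le hec x)
  exact hH.convex hx (hH.rdiv_mem hH.one_mem hx) (absv_le_self x) h1

theorem IsConvexSubalgebra.pow_mem {H : Set α} (hH : IsConvexSubalgebra H)
    {x : α} (hx : x ∈ H) : ∀ n : ℕ, x ^ n ∈ H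
  | 0 => by simpa using hH.one_mem
  | n + 1 => by rw [pow_succ]; exact hH.mul_mem (hH.pow_mem hx n) hx

theorem isConvexSubalgebra_singleton_one : IsConvexSubalgebra ({1} : Set α) := by
  have hld : ldiv (1 : α) 1 = 1 := by
    have h1 : (1 : α) ≤ ldiv 1 1 := (mul_le_iff_le_ldiv 1 1 1).mp (by simp)
    have h2 : ldiv (1 : α) 1 ≤ 1 := by simpa using mul_ldiv_le (1 : α) 1
    exact le_antisymm h2 h1
  have hrd : rdiv (1 : α) 1 = 1 := by
    have h1 : (1 : α) ≤ rdiv 1 1 := (mul_le_iff_le_rdiv 1 1 1).mp (by simp)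
    have h2 : rdiv (1 : α) 1 ≤ 1 := by simpa using rdiv_mul_le (1 : α) 1
    exact le_antisymm h2 h1
  constructor <;> intros <;> simp_all
  exact le_antisymm (by assumption) (by assumption)

theorem isConvexSubalgebra_sInter {c : Set (Set α)}
    (h : ∀ H ∈ c, IsConvexSubalgebra H) : IsConvexSubalgebra (⋂₀ c) := by
  constructor
  · exact fun H hH => (h H hH).one_mem
  · exact fun x hx y hy H hH => (h H hH).mul_mem (hx H hH) (hy H hH)
  · exact fun x hx y hy H hH => (h H hH).sup_mem (hx H hH) (hy H hH)
  · exact fun x hx y hy H hH => (h H hH).inf_mem (hx H hH) (hy H hH)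
  · exact fun x hx y hy H hH => (h H hH).ldiv_mem (hx H hH) (hy H hH)
  · exact fun x hx y hy H hH => (h H hH).rdiv_mem (hx H hH) (hy H hH)
  · exact fun a ha b hb x h1 h2 H hH => (h H hH).convex (ha H hH) (hb H hH) h1 h2

theorem isConvexSubalgebra_sUnion_chain {c : Set (Set α)} (hne : c.Nonempty)
    (hch : IsChain (· ⊆ ·) c) (h : ∀ H ∈ c, IsConvexSubalgebra H) :
    IsConvexSubalgebra (⋃₀ c) := by
  obtain ⟨H₀, hH₀⟩ := hne
  have pair : ∀ {x y : Set α}, x ∈ c → y ∈ c → ∃ z ∈ c, x ⊆ z ∧ y ⊆ z := by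
    intro x y hx hy
    rcases hch.total hx hy with hxy | hyx
    · exact ⟨y, hy, hxy, le_refl _⟩
    · exact ⟨x, hx, le_refl _, hyx⟩
  constructor
  · exact ⟨H₀, hH₀, (h H₀ hH₀).one_mem⟩
  · rintro x ⟨Hx, hHx, hx⟩ y ⟨Hy, hHy, hy⟩
    obtain ⟨Z, hZ, h1, h2⟩ := pair hHx hHy
    exact ⟨Z, hZ, (h Z hZ).mul_mem (h1 hx) (h2 hy)⟩
  · rintro x ⟨Hx, hHx, hx⟩ y ⟨Hy, hHy, hy⟩
    obtain ⟨Z, hZ, h1, h2⟩ := pair hHx hHy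
    exact ⟨Z, hZ, (h Z hZ).sup_mem (h1 hx) (h2 hy)⟩
  · rintro x ⟨Hx, hHx, hx⟩ y ⟨Hy, hHy, hy⟩
    obtain ⟨Z, hZ, h1, h2⟩ := pair hHx hHy
    exact ⟨Z, hZ, (h Z hZ).inf_mem (h1 hx) (h2 hy)⟩
  · rintro x ⟨Hx, hHx, hx⟩ y ⟨Hy, hHy, hy⟩
    obtain ⟨Z, hZ, h1, h2⟩ := pair hHx hHy
    exact ⟨Z, hZ, (h Z hZ).ldiv_mem (h1 hx) (h2 hy)⟩
  · rintro x ⟨Hx, hHx, hx⟩ y ⟨Hy, hHy, hy⟩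
    obtain ⟨Z, hZ, h1, h2⟩ := pair hHx hHy
    exact ⟨Z, hZ, (h Z hZ).rdiv_mem (h1 hx) (h2 hy)⟩
  · rintro a ⟨Ha, hHa, ha⟩ b ⟨Hb, hHb, hb⟩ x h1 h2
    obtain ⟨Z, hZ, hz1, hz2⟩ := pair hHa hHb
    exact ⟨Z, hZ, (h Z hZ).convex (hz1 ha) (hz2 hb) h1 h2⟩

/-- The candidate convex subalgebra generated by a set `T` of negative elements. -/
def omegaSet (T : Set α) : Set α :=
  {w | ∃ p ∈ Submonoid.closure T, p ≤ absv w}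

theorem closure_le_one {T : Set α} (hT : ∀ t ∈ T, t ≤ 1) {p : α}
    (hp : p ∈ Submonoid.closure T) : p ≤ 1 := by
  induction hp using Submonoid.closure_induction with
  | mem x h => exact hT x h
  | one => exact le_refl 1
  | mul x y hx hy ihx ihy => exact mul_le_one' ihx ihy

theorem omegaSet_isConvexSubalgebra (hec : ECyclic α) {T : Set α}
    (hT : ∀ t ∈ T, t ≤ 1) : IsConvexSubalgebra (omegaSet T) := by
  have hle : ∀ {p : α}, p ∈ Submonoid.closure T → p ≤ 1 := fun hp => closure_le_one hT hp
  constructor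
  · exact ⟨1, Submonoid.one_mem _, by rw [absv_one]⟩
  · -- mul
    rintro x ⟨p, hp, hpx⟩ y ⟨q, hq, hqy⟩
    refine ⟨p * q * (q * p), mul_mem (mul_mem hp hq) (mul_mem hq hp), ?_⟩
    have hpq : p * q ≤ absv x * absv y := rlmul_mono hpx hqy
    have hqp : q * p ≤ absv y * absv x := rlmul_mono hqy hpx
    have h1 : p * q * (q * p) ≤ p * q := mul_le_left (mul_le_one' (hle hq) (hle hp))
    have h2 : p * q * (q * p) ≤ q * p := mul_le_right (mul_le_one' (hle hp) (hle hq))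
    refine le_inf (le_inf ?_ ?_) (le_trans h1 (le_trans hpq (mul_le_one' (absv_le_one x) (absv_le_one y))))
    · exact le_trans h1 (le_trans hpq (rlmul_mono (absv_le_self x) (absv_le_self y)))
    · -- ≤ rdiv 1 (x*y)
      refine (mul_le_iff_le_rdiv _ _ _).mp ?_
      calc p * q * (q * p) * (x * y) ≤ absv y * absv x * (x * y) :=
            rlmul_mono (le_trans h2 hqp) (le_refl _)
        _ = absv y * (absv x * x) * y := by rw [mul_assoc, mul_assoc, mul_assoc]
        _ ≤ absv y * 1 * y := rlmul_mono (rlmul_mono (le_refl _) (absv_mul_le x)) (le_refl _)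
        _ = absv y * y := by rw [mul_one]
        _ ≤ 1 := absv_mul_le y
  · -- sup
    rintro x ⟨p, hp, hpx⟩ y ⟨q, hq, hqy⟩
    refine ⟨p * q, mul_mem hp hq, ?_⟩
    have h1 : p * q ≤ x ⊔ y :=
      le_trans (mul_le_left (hle hq)) (le_trans hpx (le_trans (absv_le_self x) le_sup_left))
    refine le_inf (le_inf h1 ?_) (mul_le_one' (le_trans hpx (absv_le_one x)) (le_trans hqy (absv_le_one y)))
    refine (mul_le_iff_le_rdiv _ _ _).mp ?_
    calc p * q * (x ⊔ y) ≤ p * q * x ⊔ p * q * y := mul_sup_le _ _ _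
      _ ≤ 1 := by
          refine sup_le ?_ ?_
          · calc p * q * x ≤ absv x * 1 * x :=
                  rlmul_mono (rlmul_mono hpx (hle hq)) (le_refl x)
              _ = absv x * x := by rw [mul_one]
              _ ≤ 1 := absv_mul_le x
          · calc p * q * y ≤ 1 * absv y * y :=
                  rlmul_mono (rlmul_mono (hle hp) hqy) (le_refl y)
              _ = absv y * y := by rw [one_mul]
              _ ≤ 1 := absv_mul_le y
  · -- inf
    rintro x ⟨p, hp, hpx⟩ y ⟨q, hq, hqy⟩
    refine ⟨p * q, mul_mem hp hq, ?_⟩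
    have hx' : p * q ≤ x := le_trans (mul_le_left (hle hq)) (le_trans hpx (absv_le_self x))
    have hy' : p * q ≤ y := le_trans (mul_le_right (hle hp)) (le_trans hqy (absv_le_self y))
    refine le_inf (le_inf (le_inf hx' hy') ?_) (mul_le_one' (hle hp) (hle hq))
    refine le_trans ?_ (rdiv_one_anti (inf_le_left (a := x) (b := y)))
    exact le_trans (mul_le_left (hle hq)) (le_trans hpx (absv_le_rdiv x))
  · -- ldiv
    rintro x ⟨p, hp, hpx⟩ y ⟨q, hq, hqy⟩
    refine ⟨q * p * (p * q), mul_mem (mul_mem hq hp) (mul_mem hp hq), ?_⟩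
    have h1 : q * p * (p * q) ≤ p * q := mul_le_right (mul_le_one' (hle hq) (hle hp))
    have h2 : q * p * (p * q) ≤ q * p := mul_le_left (mul_le_one' (hle hp) (hle hq))
    have hpq : p * q ≤ absv x * absv y := rlmul_mono hpx hqy
    have hqp : q * p ≤ absv y * absv x := rlmul_mono hqy hpx
    refine le_inf (le_inf ?_ ?_) (le_trans h1 (le_trans hpq (mul_le_one' (absv_le_one x) (absv_le_one y))))
    · exact le_trans h1 (le_trans hpq (absv_mul_absv_le_ldiv hec x y))
    · refine (mul_le_iff_le_rdiv _ _ _).mp ?_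
      calc q * p * (p * q) * ldiv x y ≤ absv y * absv x * ldiv x y :=
            rlmul_mono (le_trans h2 hqp) (le_refl _)
        _ ≤ 1 := absv_mul_absv_ldiv_le_one x y
  · -- rdiv
    rintro x ⟨p, hp, hpx⟩ y ⟨q, hq, hqy⟩
    refine ⟨p * q * (q * p), mul_mem (mul_mem hp hq) (mul_mem hq hp), ?_⟩
    have h1 : p * q * (q * p) ≤ p * q := mul_le_left (mul_le_one' (hle hq) (hle hp))
    have h2 : p * q * (q * p) ≤ q * p := mul_le_right (mul_le_one' (hle hp) (hle hq))
    have hpq : p * q ≤ absv x * absv y := rlmul_mono hpx hqy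
    have hqp : q * p ≤ absv y * absv x := rlmul_mono hqy hpx
    refine le_inf (le_inf ?_ ?_) (le_trans h1 (le_trans hpq (mul_le_one' (absv_le_one x) (absv_le_one y))))
    · exact le_trans h1 (le_trans hpq (absv_mul_absv_le_rdiv x y))
    · refine (mul_le_iff_le_rdiv _ _ _).mp ?_
      calc p * q * (q * p) * rdiv x y ≤ absv y * absv x * rdiv x y :=
            rlmul_mono (le_trans h2 hqp) (le_refl _)
        _ ≤ 1 := absv_mul_absv_rdiv_le_one hec x y
  · -- convex
    rintro a ⟨p, hp, hpa⟩ b ⟨q, hq, hqb⟩ x h1 h2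
    refine ⟨p * q, mul_mem hp hq, ?_⟩
    have hxle : p * q ≤ x :=
      le_trans (mul_le_left (hle hq)) (le_trans hpa (le_trans (absv_le_self a) h1))
    refine le_inf (le_inf hxle ?_) (mul_le_one' (hle hp) (hle hq))
    refine le_trans ?_ (rdiv_one_anti h2)
    exact le_trans (mul_le_right (hle hp)) (le_trans hqb (absv_le_rdiv b))


theorem gpow_mono {a b c : α} (h : a ≤ b) (n : ℕ) : (a * c) ^ n * a ≤ (b * c) ^ n * b :=
  rlmul_mono (pow_mono' (rlmul_mono h (le_refl c)) n) h

theorem gsplit {g₁ g₂ c : α} (hg₁ : g₁ ≤ 1) :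
    ∀ k : ℕ, (g₁ * g₂ * c) ^ k * (g₁ * g₂) ≤ g₁ * ((g₂ * c) ^ k * g₂)
  | 0 => by simp
  | k + 1 => by
    calc (g₁ * g₂ * c) ^ (k + 1) * (g₁ * g₂)
        = (g₁ * g₂ * c) * ((g₁ * g₂ * c) ^ k * (g₁ * g₂)) := by
          rw [pow_succ', mul_assoc]
      _ ≤ (g₁ * g₂ * c) * (g₁ * ((g₂ * c) ^ k * g₂)) :=
          rlmul_mono (le_refl _) (gsplit hg₁ k)
      _ ≤ (g₁ * g₂ * c) * ((g₂ * c) ^ k * g₂) :=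
          rlmul_mono (le_refl _) (mul_le_right hg₁)
      _ = g₁ * ((g₂ * c) ^ (k + 1) * g₂) := by
          rw [pow_succ']; simp only [mul_assoc]

theorem word_le {T : Set α} (h1T : (1 : α) ∈ T)
    (hmulT : ∀ x ∈ T, ∀ y ∈ T, x * y ∈ T) (hT : ∀ t ∈ T, t ≤ 1)
    {c : α} {p : α} (hp : p ∈ Submonoid.closure (T ∪ {c})) :
    ∃ g ∈ T, ∃ n : ℕ, (g * c) ^ n * g ≤ p := by
  induction hp using Submonoid.closure_induction with
  | mem x h =>
    rcases h with h | h
    · exact ⟨x, h, 0, by simp⟩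
    · rcases h with rfl
      exact ⟨1, h1T, 1, by simp⟩
  | one => exact ⟨1, h1T, 0, by simp⟩
  | mul x y hx hy ihx ihy =>
    obtain ⟨g₁, hg₁, n₁, h₁⟩ := ihx
    obtain ⟨g₂, hg₂, n₂, h₂⟩ := ihy
    refine ⟨g₁ * g₂, hmulT _ hg₁ _ hg₂, n₁ + n₂, ?_⟩
    calc (g₁ * g₂ * c) ^ (n₁ + n₂) * (g₁ * g₂)
        = (g₁ * g₂ * c) ^ n₁ * ((g₁ * g₂ * c) ^ n₂ * (g₁ * g₂)) := by
          rw [pow_add, mul_assoc]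
      _ ≤ (g₁ * g₂ * c) ^ n₁ * (g₁ * ((g₂ * c) ^ n₂ * g₂)) :=
          rlmul_mono (le_refl _) (gsplit (hT _ hg₁) n₂)
      _ ≤ (g₁ * c) ^ n₁ * (g₁ * ((g₂ * c) ^ n₂ * g₂)) := by
          refine rlmul_mono (pow_mono' ?_ n₁) (le_refl _)
          exact rlmul_mono (mul_le_left (hT _ hg₂)) (le_refl c)
      _ = ((g₁ * c) ^ n₁ * g₁) * ((g₂ * c) ^ n₂ * g₂) := by rw [mul_assoc]
      _ ≤ x * y := rlmul_mono h₁ h₂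

theorem joinpow {g u v : α} (hg : g ≤ 1) (hu : u ≤ 1) (hv : v ≤ 1) :
    ∀ N n m : ℕ, n + m = N →
      (g * (u ⊔ v)) ^ N * g ≤ (g * u) ^ n * g ⊔ (g * v) ^ m * g := by
  intro N
  induction N with
  | zero =>
    intro n m h
    obtain ⟨rfl, rfl⟩ : n = 0 ∧ m = 0 := by omega
    simp
  | succ N ih =>
    intro n m h
    have hneg : g * (u ⊔ v) ≤ 1 := mul_le_one' hg (sup_le hu hv)
    match n, m with
    | 0, m =>
      have : (g * (u ⊔ v)) ^ (N + 1) * g ≤ g :=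
        mul_le_right (pow_le_one' hneg (N + 1))
      exact le_trans this (le_trans (by simp) le_sup_left)
    | n + 1, 0 =>
      have : (g * (u ⊔ v)) ^ (N + 1) * g ≤ g :=
        mul_le_right (pow_le_one' hneg (N + 1))
      exact le_trans this (le_trans (by simp) le_sup_right)
    | n + 1, m + 1 =>
      have hA1 : (g * (u ⊔ v)) ^ N * g ≤ (g * u) ^ n * g ⊔ (g * v) ^ (m + 1) * g :=
        ih n (m + 1) (by omega)
      have hA2 : (g * (u ⊔ v)) ^ N * g ≤ (g * u) ^ (n + 1) * g ⊔ (g * v) ^ m * g :=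
        ih (n + 1) m (by omega)
      have key : (g * (u ⊔ v)) ^ (N + 1) * g
          = (g * (u ⊔ v)) * ((g * (u ⊔ v)) ^ N * g) := by rw [pow_succ', mul_assoc]
      rw [key]
      have step1 : (g * (u ⊔ v)) * ((g * (u ⊔ v)) ^ N * g)
          ≤ (g * u ⊔ g * v) * ((g * (u ⊔ v)) ^ N * g) :=
        rlmul_mono (mul_sup_le g u v) (le_refl _)
      refine le_trans step1 (le_trans (sup_mul_le _ _ _) (sup_le ?_ ?_))
      · -- (g*u) * A ≤ ...
        refine le_trans (rlmul_mono (le_refl (g * u)) hA1) ?_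
        refine le_trans (mul_sup_le _ _ _) (sup_le ?_ ?_)
        · exact le_sup_left.trans' (le_of_eq (by rw [pow_succ']; simp only [mul_assoc]))
        · refine le_sup_right.trans' ?_
          exact mul_le_right (mul_le_one' hg hu)
      · refine le_trans (rlmul_mono (le_refl (g * v)) hA2) ?_
        refine le_trans (mul_sup_le _ _ _) (sup_le ?_ ?_)
        · refine le_sup_left.trans' ?_
          exact mul_le_right (mul_le_one' hg hv)
        · exact le_sup_right.trans' (le_of_eq (by rw [pow_succ']; simp only [mul_assoc]))


end ResiduatedLattice

open ResiduatedLattice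

/-- A prime convex subalgebra: a convex subalgebra that is meet-irreducible in the
lattice of convex subalgebras. -/
def IsPrimeConvex {α : Type u} [ResiduatedLattice α] (H : Set α) : Prop :=
  IsConvexSubalgebra H ∧
  ∀ X Y : Set α, IsConvexSubalgebra X → IsConvexSubalgebra Y →
    X ∩ Y ⊆ H → X ⊆ H ∨ Y ⊆ H

/-- A minimal prime convex subalgebra. -/
def IsMinimalPrimeConvex {α : Type u} [ResiduatedLattice α] (P : Set α) : Prop :=
  IsPrimeConvex P ∧ P ≠ Set.univ ∧
  ∀ Q : Set α, IsPrimeConvex Q → Q ≠ Set.univ → Q ⊆ P → Q = P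


/-- A maximal convex subalgebra avoiding `a` is prime. -/
theorem value_isPrime {α : Type u} [ResiduatedLattice α] (hec : ECyclic α) {a : α}
    {V : Set α} (hmax : Maximal (fun H => IsConvexSubalgebra H ∧ a ∉ H) V) :
    IsPrimeConvex V := by
  obtain ⟨⟨hV, haV⟩, hmx⟩ := hmax
  refine ⟨hV, ?_⟩
  intro X Y hX hY hXY
  by_contra hcon
  push_neg at hcon
  obtain ⟨hXV, hYV⟩ := hcon
  obtain ⟨x, hxX, hxV⟩ := Set.not_subset.mp hXV
  obtain ⟨y, hyY, hyV⟩ := Set.not_subset.mp hYV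
  set x' := absv x with hx'
  set y' := absv y with hy'
  have hx'X : x' ∈ X := hX.absv_mem hxX
  have hy'Y : y' ∈ Y := hY.absv_mem hyY
  have hx'V : x' ∉ V := fun h => hxV (hV.mem_of_absv_mem hec h)
  have hy'V : y' ∉ V := fun h => hyV (hV.mem_of_absv_mem hec h)
  set z := x' ⊔ y' with hz
  have hzle : z ≤ 1 := sup_le (absv_le_one x) (absv_le_one y)
  have hzX : z ∈ X := hX.convex hx'X hX.one_mem le_sup_left hzle
  have hzY : z ∈ Y := hY.convex hy'Y hY.one_mem le_sup_right hzle
  have hzV : z ∈ V := hXY ⟨hzX, hzY⟩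
  -- negative cone of V
  set T : Set α := {v | v ∈ V ∧ v ≤ 1} with hTdef
  have h1T : (1 : α) ∈ T := ⟨hV.one_mem, le_refl 1⟩
  have hmulT : ∀ u ∈ T, ∀ v ∈ T, u * v ∈ T :=
    fun u hu v hv => ⟨hV.mul_mem hu.1 hv.1, mul_le_one' hu.2 hv.2⟩
  have hTle : ∀ t ∈ T, t ≤ 1 := fun t ht => ht.2
  -- the convex subalgebra generated by V and a negative element c
  have key : ∀ c : α, c ≤ 1 → c ∉ V → ∃ p ∈ Submonoid.closure (T ∪ {c}), p ≤ absv a := by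
    intro c hc hcV
    have hTc : ∀ t ∈ T ∪ {c}, t ≤ 1 := by
      rintro t (ht | rfl)
      · exact ht.2
      · exact hc
    have hW : IsConvexSubalgebra (omegaSet (T ∪ {c})) := omegaSet_isConvexSubalgebra hec hTc
    have hVW : V ⊆ omegaSet (T ∪ {c}) := by
      intro w hw
      exact ⟨absv w, Submonoid.subset_closure (Or.inl ⟨hV.absv_mem hw, absv_le_one w⟩),
        le_refl _⟩
    have hcW : c ∈ omegaSet (T ∪ {c}) :=
      ⟨c, Submonoid.subset_closure (Or.inr rfl), by rw [absv_of_le_one hc]⟩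
    have haW : a ∈ omegaSet (T ∪ {c}) := by
      by_contra haW
      exact hcV (hmx ⟨hW, haW⟩ hVW hcW)
    exact haW
  obtain ⟨p, hp, hpa⟩ := key x' (absv_le_one x) hx'V
  obtain ⟨q, hq, hqa⟩ := key y' (absv_le_one y) hy'V
  obtain ⟨g₁, hg₁, n, hn⟩ := word_le h1T hmulT hTle hp
  obtain ⟨g₂, hg₂, m, hm⟩ := word_le h1T hmulT hTle hq
  set g := g₁ * g₂ with hg
  have hgT : g ∈ T := hmulT _ hg₁ _ hg₂
  have h1 : (g * x') ^ n * g ≤ absv a :=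
    le_trans (gpow_mono (mul_le_left hg₂.2) n) (le_trans hn hpa)
  have h2 : (g * y') ^ m * g ≤ absv a := by
    refine le_trans (gpow_mono ?_ m) (le_trans hm hqa)
    exact mul_le_right hg₁.2
  have h3 : (g * z) ^ (n + m) * g ≤ absv a := by
    refine le_trans (joinpow hgT.2 (absv_le_one x) (absv_le_one y) (n + m) n m rfl) ?_
    exact sup_le h1 h2
  have hmem : (g * z) ^ (n + m) * g ∈ V :=
    hV.mul_mem (hV.pow_mem (hV.mul_mem hgT.1 hzV) (n + m)) hgT.1
  have habs : absv a ∈ V := hV.convex hmem hV.one_mem h3 (absv_le_one a)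
  exact haV (hV.mem_of_absv_mem hec habs)

/-- Every element `a ≠ 1` is avoided by some maximal convex subalgebra (a value). -/
theorem exists_value {α : Type u} [ResiduatedLattice α] {a : α} (ha : a ≠ 1) :
    ∃ V : Set α, Maximal (fun H => IsConvexSubalgebra H ∧ a ∉ H) V := by
  obtain ⟨m, _, hm⟩ := zorn_subset_nonempty
    {H : Set α | IsConvexSubalgebra H ∧ a ∉ H}
    (fun c hc hch hne => by
      refine ⟨⋃₀ c, ⟨isConvexSubalgebra_sUnion_chain hne hch (fun H hH => (hc hH).1), ?_⟩,
        fun s hs => Set.subset_sUnion_of_mem hs⟩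
      rintro ⟨H, hH, haH⟩
      exact (hc hH).2 haH)
    {1} ⟨isConvexSubalgebra_singleton_one, by simpa using ha⟩
  exact ⟨m, hm⟩

/-- Every proper prime convex subalgebra contains a minimal prime convex subalgebra. -/
theorem exists_minimal_prime_below {α : Type u} [ResiduatedLattice α] {P : Set α}
    (hP : IsPrimeConvex P) (hPu : P ≠ Set.univ) :
    ∃ Q : Set α, IsMinimalPrimeConvex Q ∧ Q ⊆ P := by
  obtain ⟨m, hmP, hmin⟩ := zorn_superset_nonempty
    {Q : Set α | IsPrimeConvex Q ∧ Q ≠ Set.univ ∧ Q ⊆ P}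
    (fun c hc hch hne => by
      obtain ⟨s₀, hs₀⟩ := hne
      have hsub : ⋂₀ c ⊆ s₀ := Set.sInter_subset_of_mem hs₀
      refine ⟨⋂₀ c, ⟨⟨isConvexSubalgebra_sInter (fun H hH => (hc hH).1.1), ?_⟩, ?_, ?_⟩,
        fun s hs => Set.sInter_subset_of_mem hs⟩
      · -- primality of the intersection of a chain of primes
        intro X Y hX hY hXY
        by_cases hall : ∀ s ∈ c, X ⊆ s
        · exact Or.inl (Set.subset_sInter hall)
        · push_neg at hall
          obtain ⟨t₀, ht₀c, ht₀⟩ := hall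
          refine Or.inr (Set.subset_sInter ?_)
          intro s hs
          rcases hch.total hs ht₀c with hst | hts
          · rcases (hc hs).1.2 X Y hX hY (hXY.trans (Set.sInter_subset_of_mem hs)) with h | h
            · exact absurd (h.trans hst) ht₀
            · exact h
          · rcases (hc ht₀c).1.2 X Y hX hY (hXY.trans (Set.sInter_subset_of_mem ht₀c)) with h | h
            · exact absurd h ht₀
            · exact h.trans hts
      · intro h
        exact (hc hs₀).2.1 (Set.eq_univ_of_univ_subset (h ▸ hsub))
      · exact hsub.trans (hc hs₀).2.2)
    P ⟨hP, hPu, subset_rfl⟩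
  refine ⟨m, ⟨hmin.1.1, hmin.1.2.1, ?_⟩, hmP⟩
  intro Q hQ hQu hQm
  exact subset_antisymm hQm (hmin.2 ⟨hQ, hQu, hQm.trans hmP⟩ hQm)

/-- every proper prime convex subalgebra contains a minimal prime one,
and the intersection of all minimal primes is `{e}`. -/
theorem stmt11 {α : Type u} [ResiduatedLattice α] (hec : ECyclic α) :
    (∀ P : Set α, IsPrimeConvex P → P ≠ Set.univ →
      ∃ Q : Set α, IsMinimalPrimeConvex Q ∧ Q ⊆ P) ∧
    ⋂₀ {P : Set α | IsMinimalPrimeConvex P} = {(1 : α)} := by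
  constructor
  · exact fun P hP hPu => exists_minimal_prime_below hP hPu
  · apply Set.eq_singleton_iff_unique_mem.mpr
    constructor
    · exact fun Q hQ => hQ.1.1.one_mem
    · intro x hx
      by_contra hx1
      obtain ⟨V, hmax⟩ := exists_value hx1
      have hVprime : IsPrimeConvex V := value_isPrime hec hmax
      have hVu : V ≠ Set.univ := by
        intro h
        exact hmax.1.2 (h.symm ▸ Set.mem_univ x)
      obtain ⟨Q, hQ, hQV⟩ := exists_minimal_prime_below hVprime hVu
      exact hmax.1.2 (hQV (hx Q hQ))
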